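/- arXiv:cs/0307034 — 2 statements merged into one kernel-verified Lean document; each statement's English description precedes it below -/
import Mathlib

section
/- Every finite binary tree with n ≥ 2 nodes contains an edge whose removal partitions the tree into two subtrees, each containing at most ⌈2n/3⌉ nodes (equivalently, neither side has more than 2/3 of the nodes, up to rounding). -/
/-- A (rooted) binary tree: every node has at most two children. -/
inductive BTree : Type where
  | nil : BTree
  | node : BTree → BTree → BTree

/-- Number of nodes of a binary tree. -/
def BTree.size : BTree → ℕ
  | .nil => 0
  | .node l r => l.size + r.size + 1

/-- `IsProperSubtree s t` holds when `s` is the subtree hanging below some edge of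
`t`, i.e. `s` is the subtree rooted at a child `v` of some node of `t`. -/
inductive BTree.IsProperSubtree : BTree → BTree → Prop where
  | left (l r : BTree) : BTree.IsProperSubtree l (.node l r)
  | right (l r : BTree) : BTree.IsProperSubtree r (.node l r)
  | transLeft (s l r : BTree) : BTree.IsProperSubtree s l →
      BTree.IsProperSubtree s (.node l r)
  | transRight (s l r : BTree) : BTree.IsProperSubtree s r →
      BTree.IsProperSubtree s (.node l r)

lemma BTree.IsProperSubtree.size_lt {s t : BTree} (h : s.IsProperSubtree t) :
    s.size < t.size := by
  induction h with
  | left l r => simp [BTree.size]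
  | right l r => simp [BTree.size]
  | transLeft s l r h ih => simp [BTree.size]; omega
  | transRight s l r h ih => simp [BTree.size]; omega

lemma BTree.IsProperSubtree.trans {a b c : BTree} (h1 : a.IsProperSubtree b)
    (h2 : b.IsProperSubtree c) : a.IsProperSubtree c := by
  induction h2 with
  | left l r => exact .transLeft _ _ _ h1
  | right l r => exact .transRight _ _ _ h1
  | transLeft s l r h ih => exact .transLeft _ _ _ (ih h1)
  | transRight s l r h ih => exact .transRight _ _ _ (ih h1)

lemma btree_aux (n : ℕ) (hn : 2 ≤ n) :
    ∀ u t : BTree, t.size = n → u.IsProperSubtree t → n ≤ 3 * u.size →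
      ∃ s : BTree, s.IsProperSubtree t ∧ 1 ≤ s.size ∧
        3 * s.size ≤ 2 * n + 2 ∧ 3 * (n - s.size) ≤ 2 * n + 2 := by
  intro u
  induction u with
  | nil =>
    intro t ht hsub hsz
    simp [BTree.size] at hsz
    omega
  | node l r ihl ihr =>
    intro t ht hsub hsz
    by_cases hbig : 3 * (BTree.node l r).size ≤ 2 * n + 2
    · refine ⟨BTree.node l r, hsub, ?_, hbig, ?_⟩
      · simp [BTree.size]
      · have := hsub.size_lt
        omega
    · -- descend to the larger child
      have hsz' : l.size + r.size + 1 = (BTree.node l r).size := rfl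
      by_cases hlr : r.size ≤ l.size
      · have hl : n ≤ 3 * l.size := by
          simp [BTree.size] at hbig; omega
        exact ihl t ht ((BTree.IsProperSubtree.left l r).trans hsub) hl
      · have hr : n ≤ 3 * r.size := by
          simp [BTree.size] at hbig; omega
        exact ihr t ht ((BTree.IsProperSubtree.right l r).trans hsub) hr

/-- Every binary tree with `n ≥ 2` nodes has an edge whose removal partitions it
into two parts each of size at most `⌈2n/3⌉` (equivalently, each part has at
least `n/3` of the nodes). -/
theorem btree_centroid_edge (t : BTree) (h : 2 ≤ t.size) :
    ∃ s : BTree, s.IsProperSubtree t ∧ 1 ≤ s.size ∧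
      3 * s.size ≤ 2 * t.size + 2 ∧ 3 * (t.size - s.size) ≤ 2 * t.size + 2 := by
  cases t with
  | nil => simp [BTree.size] at h
  | node l r =>
    by_cases hlr : r.size ≤ l.size
    · have hl : (BTree.node l r).size ≤ 3 * l.size := by
        simp [BTree.size] at h ⊢; omega
      exact btree_aux _ h l _ rfl (.left l r) hl
    · have hr : (BTree.node l r).size ≤ 3 * r.size := by
        simp [BTree.size] at h ⊢; omega
      exact btree_aux _ h r _ rfl (.right l r) hr
end

section
/- The recurrence T(n) = b·T(n/b) + c·n·(b + log n), with T(1) = O(1), satisfies T(n) = O(n·(b + log n)·log_b n) for any integer b ≥ 2. -/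
set_option maxHeartbeats 1600000


/-- The recurrence `T(n) ≤ b·T(⌈n/b⌉) + c·n·(b + log n)` for `n ≥ b`, with
`T(n) ≤ c` for `n < b`, has solution `T(n) = O(n·(b + log n)·log_b n)`. -/
theorem recurrence_blocks (b : ℕ) (hb : 2 ≤ b) (c : ℝ) (hc : 0 < c) (T : ℕ → ℝ)
    (hT0 : ∀ n : ℕ, 0 ≤ T n)
    (hbase : ∀ n : ℕ, n < b → T n ≤ c)
    (hrec : ∀ n : ℕ, b ≤ n → T n ≤ b * T ((n + b - 1) / b) + c * n * (b + Real.log n)) :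
    ∃ C : ℝ, ∀ n : ℕ, 2 ≤ n →
      T n ≤ C * n * (b + Real.log n) * (Real.log n / Real.log b) := by
  have hb2 : (2:ℝ) ≤ (b:ℝ) := by exact_mod_cast hb
  have hb1 : (1:ℝ) < (b:ℝ) := by linarith
  set L : ℝ := Real.log b with hLdef
  have hL : 0 < L := Real.log_pos hb1
  set D : ℝ := Real.log (((b:ℝ) + 1) / 2) with hDdef
  have hD : 0 < D := Real.log_pos (by nlinarith)
  have hlog2 : (0:ℝ) < Real.log 2 := Real.log_pos one_lt_two
  set C : ℝ := c * (4 + L / Real.log 2 + 2 * L / D) with hCdef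
  have hC4 : 4 * c ≤ C := by
    have h1 : 0 ≤ L / Real.log 2 := by positivity
    have h2 : 0 ≤ 2 * L / D := by positivity
    nlinarith
  have hC0 : 0 < C := by nlinarith
  have hClog2 : c * L ≤ C * Real.log 2 := by
    have : C * Real.log 2 ≥ (c * (L / Real.log 2)) * Real.log 2 := by
      have h1 : 0 ≤ c * (4 + 2 * L / D) := by positivity
      nlinarith
    have : (c * (L / Real.log 2)) * Real.log 2 = c * L := by
      field_simp
    nlinarith [mul_le_mul_of_nonneg_right (le_refl C) hlog2.le]
  have hCD : 2 * c * L ≤ C * D := by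
    have h1 : (c * (2 * L / D)) * D = 2 * c * L := by field_simp
    have h2 : 0 ≤ c * (4 + L / Real.log 2) := by positivity
    nlinarith
  -- strengthened claim
  have key : ∀ n : ℕ, 2 ≤ n → T n * L ≤ C * ((n:ℝ) - 1) * ((b:ℝ) + Real.log n) * Real.log n := by
    intro n
    induction n using Nat.strong_induction_on with
    | _ n IH =>
      intro hn2
      have hx2 : (2:ℝ) ≤ (n:ℝ) := by exact_mod_cast hn2
      have hLn2 : Real.log 2 ≤ Real.log n := Real.log_le_log (by norm_num) hx2
      have hLn0 : 0 < Real.log n := lt_of_lt_of_le hlog2 hLn2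
      have hbLn : (0:ℝ) < (b:ℝ) + Real.log n := by linarith
      by_cases hnb : n < b
      · -- base case: n < b
        have hTn : T n ≤ c := hbase n hnb
        have h1 : (1:ℝ) ≤ (n:ℝ) - 1 := by linarith
        have h2 : (2:ℝ) ≤ (b:ℝ) + Real.log n := by linarith
        have step : (1:ℝ) * ((2:ℝ) * Real.log 2) ≤ ((n:ℝ) - 1) * (((b:ℝ) + Real.log n) * Real.log n) := by
          apply mul_le_mul h1 _ (by positivity) (by linarith)
          apply mul_le_mul h2 hLn2 hlog2.le (by linarith)
        have : C * (1 * (2 * Real.log 2)) ≤ C * (((n:ℝ) - 1) * (((b:ℝ) + Real.log n) * Real.log n)) :=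
          mul_le_mul_of_nonneg_left step hC0.le
        have hTnL : T n * L ≤ c * L := mul_le_mul_of_nonneg_right hTn hL.le
        nlinarith [hClog2]
      · -- recursive case: b ≤ n
        push_neg at hnb
        set m : ℕ := (n + b - 1) / b with hmdef
        have hb0 : 0 < b := by omega
        have hmb : m * b ≤ n + b - 1 := Nat.div_mul_le_self _ _
        have hmlt : m < n := by
          rw [hmdef, Nat.div_lt_iff_lt_mul hb0]
          have h2n : n + b - 1 < n * 2 := by omega
          have : n * 2 ≤ n * b := Nat.mul_le_mul_left n hb
          omega
        have hmnat : m * b + 1 ≤ n + b := by omega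
        have hyb : (m:ℝ) * (b:ℝ) + 1 ≤ (n:ℝ) + (b:ℝ) := by exact_mod_cast hmnat
        have hxb : (b:ℝ) ≤ (n:ℝ) := by exact_mod_cast hnb
        have hLLn : L ≤ Real.log n := Real.log_le_log (by linarith) hxb
        have hrecn := hrec n hnb
        have hTnL : T n * L ≤ ((b:ℝ) * T m + c * n * ((b:ℝ) + Real.log n)) * L :=
          mul_le_mul_of_nonneg_right hrecn hL.le
        by_cases hm2 : 2 ≤ m
        · -- use induction hypothesis on m
          have hy2 : (2:ℝ) ≤ (m:ℝ) := by exact_mod_cast hm2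
          have hymx : (m:ℝ) ≤ (n:ℝ) := by exact_mod_cast hmlt.le
          have hLm0 : 0 < Real.log m := Real.log_pos (by linarith)
          have hLmLn : Real.log m ≤ Real.log n := Real.log_le_log (by linarith) hymx
          have hIH := IH m hmlt hm2
          -- key size fact: m*(b+1) ≤ 2n
          have hsize : (m:ℝ) * ((b:ℝ) + 1) ≤ 2 * (n:ℝ) := by
            nlinarith [mul_nonneg (by linarith : (0:ℝ) ≤ (m:ℝ) - 2) (by linarith : (0:ℝ) ≤ (b:ℝ) - 1)]
          have hstep : Real.log m + D ≤ Real.log n := by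
            have hmul : Real.log ((m:ℝ) * (((b:ℝ) + 1) / 2)) = Real.log m + D := by
              rw [Real.log_mul (by positivity) (by positivity)]
            rw [← hmul]
            apply Real.log_le_log (by positivity)
            linarith
          -- combine
          have q1 : (b:ℝ) * ((m:ℝ) - 1) ≤ (n:ℝ) - 1 := by nlinarith
          have q2 : (b:ℝ) + Real.log m ≤ (b:ℝ) + Real.log n := by linarith
          have q3 : ((b:ℝ) * ((m:ℝ) - 1)) * ((b:ℝ) + Real.log m) ≤ ((n:ℝ) - 1) * ((b:ℝ) + Real.log n) := by
            apply mul_le_mul q1 q2 (by positivity) (by linarith)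
          have s1 : (b:ℝ) * (C * ((m:ℝ) - 1) * ((b:ℝ) + Real.log m) * Real.log m)
              ≤ C * ((n:ℝ) - 1) * ((b:ℝ) + Real.log n) * Real.log m := by
            have := mul_le_mul_of_nonneg_right q3 (mul_nonneg hC0.le hLm0.le)
            linarith [this]
          -- absorb the additive cost
          have r4 : c * (n:ℝ) * L ≤ C * ((n:ℝ) - 1) * D := by
            nlinarith [mul_le_mul_of_nonneg_right hCD (by linarith : (0:ℝ) ≤ (n:ℝ)),
              mul_nonneg (mul_nonneg hC0.le hD.le) (by linarith : (0:ℝ) ≤ (n:ℝ) - 2)]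
          have r5 : C * ((n:ℝ) - 1) * Real.log m + c * (n:ℝ) * L ≤ C * ((n:ℝ) - 1) * Real.log n := by
            have : C * ((n:ℝ) - 1) * D ≤ C * ((n:ℝ) - 1) * (Real.log n - Real.log m) := by
              apply mul_le_mul_of_nonneg_left (by linarith) (by nlinarith)
            nlinarith
          have s2 : C * ((n:ℝ) - 1) * ((b:ℝ) + Real.log n) * Real.log m
                + c * (n:ℝ) * ((b:ℝ) + Real.log n) * L
              ≤ C * ((n:ℝ) - 1) * ((b:ℝ) + Real.log n) * Real.log n := by
            linarith [mul_le_mul_of_nonneg_right r5 hbLn.le]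
          have hbTm : (b:ℝ) * T m * L ≤ (b:ℝ) * (C * ((m:ℝ) - 1) * ((b:ℝ) + Real.log m) * Real.log m) := by
            have := mul_le_mul_of_nonneg_left hIH (by positivity : (0:ℝ) ≤ (b:ℝ))
            linarith [this]
          linarith [hTnL, hbTm, s1, s2]
        · -- m < 2, i.e. m = 1 : T m ≤ c
          have hm1 : m < b := by omega
          have hTm : T m ≤ c := hbase m hm1
          have t1 : 2 * c * (n:ℝ) ≤ C * ((n:ℝ) - 1) := by nlinarith
          have t2 : 2 * c * (n:ℝ) * L ≤ C * ((n:ℝ) - 1) * Real.log n := by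
            apply mul_le_mul t1 hLLn hL.le (by nlinarith)
          have t3 : 2 * c * (n:ℝ) * L * ((b:ℝ) + Real.log n)
              ≤ C * ((n:ℝ) - 1) * Real.log n * ((b:ℝ) + Real.log n) :=
            mul_le_mul_of_nonneg_right t2 hbLn.le
          have hA : (b:ℝ) * c * L ≤ c * (n:ℝ) * ((b:ℝ) + Real.log n) * L := by
            have hh1 : (n:ℝ) * 1 ≤ (n:ℝ) * ((b:ℝ) + Real.log n) :=
              mul_le_mul_of_nonneg_left (by linarith) (by linarith)
            have hh2 : 0 ≤ c * ((n:ℝ) - (b:ℝ)) := mul_nonneg hc.le (by linarith)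
            have hh3 : 0 ≤ c * ((n:ℝ) * ((b:ℝ) + Real.log n) - (n:ℝ)) :=
              mul_nonneg hc.le (by linarith)
            have h1 : (b:ℝ) * c ≤ c * (n:ℝ) * ((b:ℝ) + Real.log n) := by nlinarith
            have := mul_le_mul_of_nonneg_right h1 hL.le
            linarith
          have hbTm : (b:ℝ) * T m * L ≤ (b:ℝ) * c * L := by
            have := mul_le_mul_of_nonneg_right (mul_le_mul_of_nonneg_left hTm (by positivity : (0:ℝ) ≤ (b:ℝ))) hL.le
            linarith [this]
          linarith [hTnL, hbTm, hA, t3]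
  refine ⟨C, fun n hn2 => ?_⟩
  have hx2 : (2:ℝ) ≤ (n:ℝ) := by exact_mod_cast hn2
  have hLn0 : 0 < Real.log n := Real.log_pos (by linarith)
  have hbLn : (0:ℝ) < (b:ℝ) + Real.log n := by linarith
  have hk := key n hn2
  have hmono : C * ((n:ℝ) - 1) * ((b:ℝ) + Real.log n) * Real.log n
      ≤ C * (n:ℝ) * ((b:ℝ) + Real.log n) * Real.log n := by
    nlinarith [mul_pos hbLn hLn0, hC0]
  have : T n * L ≤ C * (n:ℝ) * ((b:ℝ) + Real.log n) * Real.log n := le_trans hk hmono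
  rw [show C * (n:ℝ) * ((b:ℝ) + Real.log n) * (Real.log n / L)
      = C * (n:ℝ) * ((b:ℝ) + Real.log n) * Real.log n / L by ring]
  rw [le_div_iff₀ hL]
  exact this
end
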